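/- arXiv:1208.3180 — 2 statements merged into one kernel-verified Lean document; each statement's English description precedes it below -/
import Mathlib

section
/- Let f : S¹ × S² → S¹ × S² be defined (identifying S² with ℂ ∪ {∞}) by f(z,w) = (z², (z+w)/3) for w ∈ ℂ and f(z,∞) = (z²,∞). Then f is a local homeomorphism, f maps the solid torus S¹ × 𝔻 (𝔻 the closed unit disc) into its interior, and f restricted to the attractor A = ⋂_{n≥0} f^n(S¹ × 𝔻) is injective, while f is not injective on S¹ × ℂ. -/
open OnePoint Metric Filter Topology

lemma contAux (a b : ℂ) (ha : a ≠ 0) :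
    Continuous (fun p : Circle × OnePoint ℂ =>
      OnePoint.map (fun c : ℂ => a * c + b * (p.1 : ℂ)) p.2) := by
  rw [continuous_iff_continuousAt]
  rintro ⟨z, w⟩
  have hcont : Continuous (fun q : Circle × ℂ => a * q.2 + b * (q.1 : ℂ)) := by
    continuity
  induction w using OnePoint.rec with
  | infty =>
      unfold ContinuousAt
      simp only [OnePoint.map_infty]
      have hsplit : (𝓝 z ×ˢ 𝓝 (∞ : OnePoint ℂ)) =
          (𝓝 z ×ˢ Filter.map ((↑) : ℂ → OnePoint ℂ) (coclosedCompact ℂ)) ⊔ (𝓝 z ×ˢ pure ∞) := by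
        rw [OnePoint.nhds_infty_eq, Filter.prod_sup]
      rw [nhds_prod_eq, hsplit, Filter.tendsto_sup]
      constructor
      · have heq : (𝓝 z ×ˢ Filter.map ((↑) : ℂ → OnePoint ℂ) (coclosedCompact ℂ))
            = Filter.map (fun q : Circle × ℂ => (q.1, (q.2 : OnePoint ℂ)))
              (𝓝 z ×ˢ coclosedCompact ℂ) := by
          conv_lhs => rw [← Filter.map_id (f := 𝓝 z)]
          rw [Filter.prod_map_map_eq]; rfl
        rw [heq, Filter.tendsto_map'_iff]
        have : ((fun p : Circle × OnePoint ℂ =>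
            OnePoint.map (fun c : ℂ => a * c + b * (p.1 : ℂ)) p.2) ∘
            (fun q : Circle × ℂ => (q.1, (q.2 : OnePoint ℂ))))
            = (fun q : Circle × ℂ => ((a * q.2 + b * (q.1 : ℂ) : ℂ) : OnePoint ℂ)) := by
          funext q; rfl
        rw [this]
        refine OnePoint.tendsto_coe_infty.comp ?_
        rw [Filter.coclosedCompact_eq_cocompact, ← Metric.cobounded_eq_cocompact,
          ← tendsto_norm_atTop_iff_cobounded]
        have hb : Tendsto (fun q : Circle × ℂ => ‖a‖ * ‖q.2‖ - ‖b‖)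
            (𝓝 z ×ˢ Bornology.cobounded ℂ) atTop := by
          apply Filter.tendsto_atTop_add_const_right
          apply Filter.Tendsto.const_mul_atTop (norm_pos_iff.mpr ha)
          exact tendsto_norm_cobounded_atTop.comp Filter.tendsto_snd
        refine tendsto_atTop_mono (fun q => ?_) hb
        have h1 : ‖a * q.2‖ ≤ ‖a * q.2 + b * (q.1 : ℂ)‖ + ‖b * (q.1 : ℂ)‖ := by
          calc ‖a * q.2‖ = ‖(a * q.2 + b * (q.1:ℂ)) - b * (q.1:ℂ)‖ := by ring_nf
            _ ≤ _ := norm_sub_le _ _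
        have h2 : ‖b * (q.1 : ℂ)‖ = ‖b‖ := by
          simp [Circle.norm_coe]
        rw [norm_mul] at h1
        rw [h2] at h1
        linarith
      · rw [Filter.prod_pure, Filter.tendsto_map'_iff]
        exact tendsto_const_nhds
  | coe c =>
      unfold ContinuousAt
      simp only [OnePoint.map_some]
      rw [nhds_prod_eq, OnePoint.nhds_coe_eq]
      have heq : (𝓝 z ×ˢ Filter.map ((↑) : ℂ → OnePoint ℂ) (𝓝 c))
          = Filter.map (fun q : Circle × ℂ => (q.1, (q.2 : OnePoint ℂ))) (𝓝 z ×ˢ 𝓝 c) := by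
        conv_lhs => rw [← Filter.map_id (f := 𝓝 z)]
        rw [Filter.prod_map_map_eq]; rfl
      rw [heq, Filter.tendsto_map'_iff]
      have : ((fun p : Circle × OnePoint ℂ =>
          OnePoint.map (fun c : ℂ => a * c + b * (p.1 : ℂ)) p.2) ∘
          (fun q : Circle × ℂ => (q.1, (q.2 : OnePoint ℂ))))
          = (fun q : Circle × ℂ => ((a * q.2 + b * (q.1 : ℂ) : ℂ) : OnePoint ℂ)) := by
        funext q; rfl
      rw [this]
      have := (OnePoint.continuous_coe.comp hcont).tendsto (z, c)
      rwa [nhds_prod_eq] at this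

noncomputable def Gmap : Circle × OnePoint ℂ ≃ₜ Circle × OnePoint ℂ where
  toFun p := (p.1, OnePoint.map (fun c : ℂ => (1/3 : ℂ) * c + (1/3 : ℂ) * (p.1 : ℂ)) p.2)
  invFun p := (p.1, OnePoint.map (fun c : ℂ => (3 : ℂ) * c + (-1 : ℂ) * (p.1 : ℂ)) p.2)
  left_inv p := by
    obtain ⟨z, w⟩ := p
    induction w using OnePoint.rec with
    | infty => rfl
    | coe c =>
        simp only [OnePoint.map_some]
        refine Prod.ext rfl ?_
        show ((3 * ((1/3 : ℂ) * c + (1/3 : ℂ) * (z:ℂ)) + (-1 : ℂ) * (z:ℂ) : ℂ) : OnePoint ℂ)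
          = (c : OnePoint ℂ)
        congr 1; ring
  right_inv p := by
    obtain ⟨z, w⟩ := p
    induction w using OnePoint.rec with
    | infty => rfl
    | coe c =>
        simp only [OnePoint.map_some]
        refine Prod.ext rfl ?_
        show (((1/3 : ℂ) * ((3:ℂ) * c + (-1 : ℂ) * (z:ℂ)) + (1/3 : ℂ) * (z:ℂ) : ℂ) : OnePoint ℂ)
          = (c : OnePoint ℂ)
        congr 1; ring
  continuous_toFun := continuous_fst.prodMk (contAux (1/3) (1/3) (by norm_num))
  continuous_invFun := continuous_fst.prodMk (contAux 3 (-1) (by norm_num))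

lemma isLocalHomeomorph_sq : IsLocalHomeomorph (fun z : Circle => z ^ 2) := by
  have key : ((fun z : Circle => z ^ 2) ∘ Circle.exp) = Circle.exp ∘ (fun t : ℝ => 2 * t) := by
    funext t
    simp only [Function.comp_apply, sq, ← Circle.exp_add, two_mul]
  have h1 : IsLocalHomeomorph ((fun z : Circle => z ^ 2) ∘ Circle.exp) := by
    rw [key]
    exact isLocalHomeomorph_circleExp.comp
      (Homeomorph.mulLeft₀ (2 : ℝ) two_ne_zero).isLocalHomeomorph
  have hs : Function.Surjective Circle.exp := fun z =>
    ⟨Complex.arg (z : ℂ), Circle.leftInverse_exp_arg z⟩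
  have h2 := IsLocalHomeomorphOn.of_comp_right
    (h1.isLocalHomeomorphOn (s := Set.univ)) (isLocalHomeomorph_circleExp.isLocalHomeomorphOn)
  rw [Set.image_univ, Function.Surjective.range_eq hs] at h2
  exact isLocalHomeomorph_iff_isLocalHomeomorphOn_univ.mpr h2

lemma prodMapLH {X Y : Type*} [TopologicalSpace X] [TopologicalSpace Y] {g : X → X}
    (hg : IsLocalHomeomorph g) :
    IsLocalHomeomorph (Prod.map g (id : Y → Y)) := by
  intro p
  obtain ⟨e, he, hfe⟩ := hg p.1
  refine ⟨e.prod (OpenPartialHomeomorph.refl Y), ⟨he, Set.mem_univ _⟩, ?_⟩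
  rw [hfe]; rfl


/-- The counterexample on `S¹ × S²` (with `S²` the Riemann sphere `ℂ ∪ {∞}`):
`f(z,w) = (z², (z+w)/3)`, `f(z,∞) = (z²,∞)`.  Then `f` is a local homeomorphism,
maps the solid torus `S¹ × 𝔻` into its interior, is injective on the attractor
`A = ⋂_{n≥0} fⁿ(S¹ × 𝔻)`, but is not injective on `S¹ × ℂ`. -/
theorem solenoid_counterexample
    (f : Circle × OnePoint ℂ → Circle × OnePoint ℂ)
    (hfinf : ∀ z : Circle, f (z, OnePoint.infty) = (z ^ 2, OnePoint.infty))
    (hfc : ∀ (z : Circle) (c : ℂ),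
      f (z, (c : OnePoint ℂ)) = (z ^ 2, ((((z : ℂ) + c) / 3 : ℂ) : OnePoint ℂ)))
    (T : Set (Circle × OnePoint ℂ))
    (hT : T = (Set.univ : Set Circle) ×ˢ
        ((fun c : ℂ => (c : OnePoint ℂ)) '' closedBall (0 : ℂ) 1))
    (A : Set (Circle × OnePoint ℂ)) (hA : A = ⋂ n : ℕ, f^[n] '' T) :
    IsLocalHomeomorph f ∧ f '' T ⊆ interior T ∧ Set.InjOn f A ∧
      ¬ Set.InjOn f ((Set.univ : Set Circle) ×ˢ
        Set.range (fun c : ℂ => (c : OnePoint ℂ))) := by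
  have hf_eq : f = (Prod.map (fun z : Circle => z ^ 2) (id : OnePoint ℂ → OnePoint ℂ)) ∘ ⇑Gmap := by
    funext p
    obtain ⟨z, w⟩ := p
    induction w using OnePoint.rec with
    | infty => rw [show (∞ : OnePoint ℂ) = OnePoint.infty from rfl, hfinf z]; rfl
    | coe c =>
        rw [hfc z c]
        show (z ^ 2, ((((z : ℂ) + c) / 3 : ℂ) : OnePoint ℂ))
          = (z ^ 2, (((1/3 : ℂ) * c + (1/3 : ℂ) * (z : ℂ) : ℂ) : OnePoint ℂ))
        refine Prod.ext rfl ?_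
        congr 1; ring
  refine ⟨?_, ?_, ?_, ?_⟩
  · rw [hf_eq]
    exact (prodMapLH isLocalHomeomorph_sq).comp Gmap.isLocalHomeomorph
  · rintro _ ⟨⟨z, w⟩, hmem, rfl⟩
    rw [hT] at hmem
    obtain ⟨c, hc, rfl⟩ := hmem.2
    rw [mem_closedBall_zero_iff] at hc
    have hUopen : IsOpen ((Set.univ : Set Circle) ×ˢ
        ((fun c : ℂ => (c : OnePoint ℂ)) '' ball (0 : ℂ) 1)) :=
      isOpen_univ.prod (OnePoint.isOpenMap_coe _ isOpen_ball)
    have hUsub : ((Set.univ : Set Circle) ×ˢ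
        ((fun c : ℂ => (c : OnePoint ℂ)) '' ball (0 : ℂ) 1)) ⊆ T := by
      rw [hT]
      exact Set.prod_mono le_rfl (Set.image_mono ball_subset_closedBall)
    refine interior_maximal hUsub hUopen ?_
    rw [hfc]
    refine ⟨Set.mem_univ _, ⟨((z : ℂ) + c) / 3, ?_, rfl⟩⟩
    rw [mem_ball, dist_zero_right]
    have hz1 : ‖(z : ℂ)‖ = 1 := Circle.norm_coe z
    have h2 : ‖(z : ℂ) + c‖ ≤ 2 := le_trans (norm_add_le _ _) (by rw [hz1]; linarith)
    have h3 : ‖((z : ℂ) + c) / 3‖ = ‖(z : ℂ) + c‖ / 3 := by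
      rw [norm_div]; norm_num
    rw [h3]; linarith
  · have hAfT : A ⊆ f '' T := by
      rw [hA]; intro x hx
      have := Set.mem_iInter.mp hx 1
      simpa using this
    have key : ∀ p ∈ A, ∃ (z : Circle) (c : ℂ), p = (z, (c : OnePoint ℂ)) ∧ ‖c‖ ≤ 2/3 := by
      intro p hp
      obtain ⟨⟨z₀, w₀⟩, hqT, hq⟩ := hAfT hp
      rw [hT] at hqT
      obtain ⟨c₀, hc₀, rfl⟩ := hqT.2
      rw [mem_closedBall_zero_iff] at hc₀
      refine ⟨z₀ ^ 2, ((z₀ : ℂ) + c₀) / 3, ?_, ?_⟩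
      · rw [← hq, hfc]
      · have hz1 : ‖(z₀ : ℂ)‖ = 1 := Circle.norm_coe z₀
        have h2 : ‖(z₀ : ℂ) + c₀‖ ≤ 2 := le_trans (norm_add_le _ _) (by rw [hz1]; linarith)
        have h3 : ‖((z₀ : ℂ) + c₀) / 3‖ = ‖(z₀ : ℂ) + c₀‖ / 3 := by
          rw [norm_div]; norm_num
        rw [h3]; linarith
    rintro p hp q hq hfeq
    obtain ⟨z₁, c₁, rfl, hb₁⟩ := key p hp
    obtain ⟨z₂, c₂, rfl, hb₂⟩ := key q hq
    rw [hfc, hfc] at hfeq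
    have h1 : z₁ ^ 2 = z₂ ^ 2 := (Prod.ext_iff.mp hfeq).1
    have h2 : ((z₁ : ℂ) + c₁) / 3 = ((z₂ : ℂ) + c₂) / 3 :=
      OnePoint.coe_eq_coe.mp (Prod.ext_iff.mp hfeq).2
    have h2' : (z₁ : ℂ) + c₁ = (z₂ : ℂ) + c₂ := by
      field_simp at h2; exact h2
    have hz : (z₁ : ℂ) ^ 2 = (z₂ : ℂ) ^ 2 := by rw [← Circle.coe_pow, ← Circle.coe_pow, h1]
    have hfac : ((z₁ : ℂ) - z₂) * ((z₁ : ℂ) + z₂) = 0 := by linear_combination hz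
    rcases mul_eq_zero.mp hfac with h | h
    · have hzz : z₁ = z₂ := Subtype.ext (sub_eq_zero.mp h)
      subst hzz
      have hcc : c₁ = c₂ := by
        have := add_left_cancel h2'
        exact this
      rw [hcc]
    · exfalso
      have he : c₂ - c₁ = 2 * (z₁ : ℂ) := by linear_combination -h2' - h
      have hle : ‖c₂ - c₁‖ ≤ 4/3 := le_trans (norm_sub_le _ _) (by linarith)
      rw [he] at hle
      have : ‖(2 : ℂ) * (z₁ : ℂ)‖ = 2 := by
        rw [norm_mul]; simp [Circle.norm_coe]
      rw [this] at hle
      linarith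
  · intro hinj
    have hz₂ : ((Circle.exp Real.pi : Circle) : ℂ) = -1 := by
      rw [Circle.coe_exp]; exact_mod_cast Complex.exp_pi_mul_I
    have hsq : (Circle.exp Real.pi) ^ 2 = 1 := by
      rw [sq, ← Circle.exp_add, ← two_mul, Circle.exp_two_pi]
    have hfeq : f ((1 : Circle), ((-1 : ℂ) : OnePoint ℂ))
        = f ((Circle.exp Real.pi), ((1 : ℂ) : OnePoint ℂ)) := by
      rw [hfc, hfc]
      refine Prod.ext (by rw [one_pow, hsq]) ?_
      show ((((1 : Circle) : ℂ) + (-1)) / 3 : ℂ) = (((((Circle.exp Real.pi) : ℂ) + 1) / 3 : ℂ) : OnePoint ℂ)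
      congr 1
      rw [hz₂]
      simp
    have h1 := hinj ⟨Set.mem_univ _, ⟨-1, rfl⟩⟩ ⟨Set.mem_univ _, ⟨1, rfl⟩⟩ hfeq
    have h2 : ((1 : Circle) : ℂ) = ((Circle.exp Real.pi : Circle) : ℂ) :=
      congrArg (fun p : Circle × OnePoint ℂ => ((p.1 : Circle) : ℂ)) h1
    rw [hz₂] at h2
    norm_num at h2
end

section
/- Let f : M → M be a continuous map of a compact manifold with an attracting pair (f,U) such that f has no critical points in U and f^{-1}(A) ∩ U = A, where A is the attracting set. Then no connected component of M \ A is entirely contained in U. -/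
open Set Topology Filter Function

section helpers
variable {X : Type*} [TopologicalSpace X]

/-- A preconnected set meeting an open set but not contained in it meets its frontier. -/
lemma aux_frontier_hit {B E : Set X} (hB : IsPreconnected B) (hE : IsOpen E)
    (h1 : (B ∩ E).Nonempty) (h2 : ¬ B ⊆ E) : (B ∩ (closure E \ E)).Nonempty := by
  by_contra h
  rw [Set.not_nonempty_iff_eq_empty] at h
  have hcover : B ⊆ E ∪ (closure E)ᶜ := by
    intro y hy
    by_cases hyE : y ∈ E
    · exact Or.inl hyE
    · refine Or.inr fun hyc => ?_
      have : y ∈ B ∩ (closure E \ E) := ⟨hy, hyc, hyE⟩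
      rw [h] at this
      exact this
  rcases hB.subset_or_subset hE isClosed_closure.isOpen_compl
    (disjoint_compl_right.mono_left subset_closure) hcover with hs | hs
  · exact h2 hs
  · rcases h1 with ⟨y, hyB, hyE⟩
    exact hs hyB (subset_closure hyE)

/-- Points of the ambient set in the closure of a `connectedComponentIn` belong to it. -/
lemma aux_closure_cci {F : Set X} {x : X} (hx : x ∈ F) :
    closure (connectedComponentIn F x) ∩ F ⊆ connectedComponentIn F x := by
  intro y hy
  have hconn : IsPreconnected (connectedComponentIn F x ∪ {y}) := by
    refine IsPreconnected.subset_closure isPreconnected_connectedComponentIn subset_union_left ?_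
    rintro z (hz | rfl)
    · exact subset_closure hz
    · exact hy.1
  have : connectedComponentIn F x ∪ {y} ⊆ connectedComponentIn F x :=
    hconn.subset_connectedComponentIn (Or.inl (mem_connectedComponentIn hx))
      (union_subset (connectedComponentIn_subset F x) (by simpa using hy.2))
  exact this (Or.inr rfl)

/-- A nonempty connected open set that is clopen within `F` equals the connected component. -/
lemma aux_eq_cci {F E : Set X} {x : X} (hE : IsOpen E) (hEF : E ⊆ F)
    (hcl : closure E ∩ F ⊆ E) (hconn : IsPreconnected E) (hx : x ∈ E) :
    E = connectedComponentIn F x := by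
  refine subset_antisymm (hconn.subset_connectedComponentIn hx hEF) ?_
  have hxF : x ∈ F := hEF hx
  have hcover : connectedComponentIn F x ⊆ E ∪ (closure E)ᶜ := by
    intro y hy
    by_cases hyE : y ∈ E
    · exact Or.inl hyE
    · exact Or.inr fun hyc => hyE (hcl ⟨hyc, connectedComponentIn_subset F x hy⟩)
  rcases isPreconnected_connectedComponentIn.subset_or_subset hE
      isClosed_closure.isOpen_compl (disjoint_compl_right.mono_left subset_closure) hcover with
    hs | hs
  · exact hs
  · exact absurd (subset_closure hx) (by simpa using hs (mem_connectedComponentIn hxF))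

/-- Image of an open subset of `U` under a map which is a local homeomorphism on `U` is open. -/
lemma aux_image_open {Y : Type*} [TopologicalSpace Y] {f : X → Y} {U t : Set X}
    (hloc : IsLocalHomeomorphOn f U) (ht : IsOpen t) (htU : t ⊆ U) : IsOpen (f '' t) := by
  rw [isOpen_iff_mem_nhds]
  rintro _ ⟨x, hxt, rfl⟩
  rw [← hloc.map_nhds_eq (htU hxt)]
  exact Filter.image_mem_map (ht.mem_nhds hxt)

end helpers

/-- On a compact manifold: if `(f, U)` is an attracting pair such that `f` has no
critical points in `U` (i.e. `f` is a local homeomorphism on `U`) and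
`f⁻¹(A) ∩ U = A`, where `A` is the attracting set, then no connected component of
`M \ A` is entirely contained in `U`. -/
theorem no_component_of_complement_in_U
    {n : ℕ} {M : Type} [TopologicalSpace M] [CompactSpace M] [T2Space M]
    [ChartedSpace (EuclideanSpace ℝ (Fin n)) M]
    (f : M → M) (hf : Continuous f) (U : Set M) (hU : IsOpen U) (hne : U.Nonempty)
    (hproper : U ≠ Set.univ) (hattr : closure (f '' U) ⊆ U)
    (A : Set M) (hA : A = ⋂ k : ℕ, f^[k] '' U)
    (hloc : IsLocalHomeomorphOn f U) (hpre : f ⁻¹' A ∩ U = A) :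
    ∀ x ∈ Aᶜ, ¬ connectedComponentIn Aᶜ x ⊆ U := by
  haveI hLC : LocallyConnectedSpace M :=
    ChartedSpace.locallyConnectedSpace (H := EuclideanSpace ℝ (Fin n)) (M := M)
  intro x hxA hCU
  haveI : Nonempty M := ⟨x⟩
  set C := connectedComponentIn Aᶜ x with hCdef
  set F : ℕ → Set M := fun k => f^[k] '' U with hFdef
  have hF0 : F 0 = U := by simp [hFdef]
  have hfU : f '' U ⊆ U := subset_trans subset_closure hattr
  have hFsucc : ∀ k, F (k + 1) = f '' F k := by
    intro k
    simp only [hFdef, Function.iterate_succ', Set.image_comp]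
  have hFsucc' : ∀ k, F (k + 1) = f^[k] '' (f '' U) := by
    intro k
    simp only [hFdef, Function.iterate_succ, Set.image_comp]
  have hFsub : ∀ k, F k ⊆ U := by
    intro k
    induction k with
    | zero => simp [hF0]
    | succ k ih => rw [hFsucc]; exact (Set.image_mono (f := f) ih).trans hfU
  have hFopen : ∀ k, IsOpen (F k) := by
    intro k
    induction k with
    | zero => simpa [hF0] using hU
    | succ k ih => rw [hFsucc]; exact aux_image_open hloc ih (hFsub k)
  have hFanti : Antitone F := by
    refine antitone_nat_of_succ_le fun k => ?_
    rw [hFsucc']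
    exact Set.image_mono (f := _) hfU
  have hAF : ∀ k, A ⊆ F k := by
    intro k
    rw [hA]
    exact Set.iInter_subset _ k
  have hAsubU : A ⊆ U := (hAF 0).trans (by rw [hF0])
  set CL := closure (f '' U) with hCLdef
  have hCLcomp : IsCompact CL := isClosed_closure.isCompact
  have hAL : A = ⋂ k, f^[k] '' CL := by
    apply Set.Subset.antisymm
    · intro y hy
      rw [Set.mem_iInter]
      intro k
      have h1 : y ∈ F (k + 1) := by
        rw [hA] at hy
        exact Set.mem_iInter.mp hy (k + 1)
      rw [hFsucc'] at h1
      exact Set.image_mono (f := _) subset_closure h1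
    · intro y hy
      rw [hA]
      refine Set.mem_iInter.mpr fun k => ?_
      exact Set.image_mono (f := _) hattr (Set.mem_iInter.mp hy k)
  have hAclosed : IsClosed A := by
    rw [hAL]
    exact isClosed_iInter fun k => ((hCLcomp.image (hf.iterate k))).isClosed
  have hAc_open : IsOpen Aᶜ := hAclosed.isOpen_compl
  have horbit : ∀ (y : M) (k : ℕ), y ∈ U → f^[k] y ∈ U := by
    intro y k hy
    induction k with
    | zero => simpa using hy
    | succ k ih =>
      rw [Function.iterate_succ_apply']
      exact hfU ⟨_, ih, rfl⟩
  have hfA : f '' A ⊆ A := by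
    rintro _ ⟨y, hyA, rfl⟩
    rw [hA, Set.mem_iInter]
    intro k
    have h1 : f y ∈ F (k + 1) := by
      rw [hFsucc]
      exact ⟨y, hAF k hyA, rfl⟩
    exact hFanti (Nat.le_succ k) h1
  have horbitA : ∀ (k : ℕ) (y : M), y ∈ A → f^[k] y ∈ A := by
    intro k y hy
    induction k with
    | zero => simpa using hy
    | succ k ih =>
      rw [Function.iterate_succ_apply']
      exact hfA ⟨_, ih, rfl⟩
  have hpreit : ∀ (k : ℕ) (y : M), y ∈ U → f^[k] y ∈ A → y ∈ A := by
    intro k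
    induction k with
    | zero => intro y _ h; simpa using h
    | succ k ih =>
      intro y hyU hk
      rw [Function.iterate_succ_apply] at hk
      have hfy : f y ∈ U := hfU ⟨y, hyU, rfl⟩
      have : f y ∈ A := ih (f y) hfy hk
      rw [← hpre]
      exact ⟨this, hyU⟩
  have hxC : x ∈ C := mem_connectedComponentIn hxA
  have hxU : x ∈ U := hCU hxC
  have hCsub : C ⊆ Aᶜ := connectedComponentIn_subset _ _
  have hCopen : IsOpen C := hAc_open.connectedComponentIn
  have hCconn : IsConnected C := isConnected_connectedComponentIn_iff.mpr hxA
  have hCclA : closure C \ C ⊆ A := by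
    intro y hy
    by_contra hyA
    exact hy.2 (aux_closure_cci hxA ⟨hy.1, hyA⟩)
  -- a set contained in U, disjoint from A, cannot be (forward) periodic
  have hper : ∀ D : Set M, D ⊆ U → D.Nonempty → D ⊆ Aᶜ →
      ∀ j, 1 ≤ j → f^[j] '' D = D → False := by
    intro D hDU hDne hDA j hj hfix
    have key : ∀ m : ℕ, D ⊆ F (j * m) := by
      intro m
      induction m with
      | zero => simpa [hF0] using hDU
      | succ m ih =>
        have h1 : D ⊆ f^[j] '' (F (j * m)) := by
          rw [← hfix]
          exact Set.image_mono (f := _) ih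
        have h2 : f^[j] '' (F (j * m)) = F (j + j * m) := by
          simp only [hFdef, ← Set.image_comp, ← Function.iterate_add]
        have h3 : j + j * m = j * (m + 1) := by ring
        rw [h2, h3] at h1
        exact h1
    have hDsubA : D ⊆ A := by
      rw [hA]
      intro y hy
      rw [Set.mem_iInter]
      intro k
      exact hFanti (Nat.le_mul_of_pos_left k hj) (key k hy)
    rcases hDne with ⟨d, hd⟩
    exact hDA hd (hDsubA hd)
  -- the image of a component of Aᶜ contained in U is a full component of Aᶜ
  have hstep : ∀ y : M, y ∈ Aᶜ → connectedComponentIn Aᶜ y ⊆ U →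
      f '' connectedComponentIn Aᶜ y = connectedComponentIn Aᶜ (f y) := by
    intro y hy hDU
    have hDopen : IsOpen (connectedComponentIn Aᶜ y) := hAc_open.connectedComponentIn
    have hDconn : IsConnected (connectedComponentIn Aᶜ y) :=
      isConnected_connectedComponentIn_iff.mpr hy
    have hyD : y ∈ connectedComponentIn Aᶜ y := mem_connectedComponentIn hy
    have hDclA : closure (connectedComponentIn Aᶜ y) \ connectedComponentIn Aᶜ y ⊆ A := by
      intro z hz
      by_contra hzA
      exact hz.2 (aux_closure_cci hy ⟨hz.1, hzA⟩)
    have himgopen : IsOpen (f '' connectedComponentIn Aᶜ y) := aux_image_open hloc hDopen hDU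
    have himgsub : f '' connectedComponentIn Aᶜ y ⊆ Aᶜ := by
      rintro _ ⟨d, hd, rfl⟩ hfd
      exact (connectedComponentIn_subset _ _ hd) (hpreit 1 d (hDU hd) (by simpa using hfd))
    have hclimg : closure (f '' connectedComponentIn Aᶜ y) ∩ Aᶜ ⊆ f '' connectedComponentIn Aᶜ y := by
      have h1 : closure (f '' connectedComponentIn Aᶜ y) ⊆ f '' closure (connectedComponentIn Aᶜ y) := by
        have hc : IsCompact (f '' closure (connectedComponentIn Aᶜ y)) :=
          (isClosed_closure.isCompact).image hf
        exact closure_minimal (Set.image_mono (f := f) subset_closure) hc.isClosed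
      rintro z ⟨hz1, hz2⟩
      obtain ⟨d, hd, rfl⟩ := h1 hz1
      by_cases hdD : d ∈ connectedComponentIn Aᶜ y
      · exact ⟨d, hdD, rfl⟩
      · exact absurd (hfA ⟨d, hDclA ⟨hd, hdD⟩, rfl⟩) hz2
    exact aux_eq_cci himgopen himgsub hclimg
      (hDconn.image f hf.continuousOn).isPreconnected (Set.mem_image_of_mem f hyD)
  -- iterated version
  have hgen : ∀ y : M, y ∈ Aᶜ → y ∈ U → connectedComponentIn Aᶜ y ⊆ U → ∀ j : ℕ,
      f^[j] y ∈ Aᶜ ∧ f^[j] '' connectedComponentIn Aᶜ y = connectedComponentIn Aᶜ (f^[j] y) ∧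
        connectedComponentIn Aᶜ (f^[j] y) ⊆ U := by
    intro y hy hyU hcompU j
    induction j with
    | zero => exact ⟨by simpa using hy, by simp, by simpa using hcompU⟩
    | succ j ih =>
      obtain ⟨ih1, ih2, ih3⟩ := ih
      have hnext : f^[j + 1] y = f (f^[j] y) := Function.iterate_succ_apply' f j y
      have h1 : f^[j + 1] y ∈ Aᶜ := fun hmem => hy (hpreit (j + 1) y hyU hmem)
      have h2 : f^[j + 1] '' connectedComponentIn Aᶜ y = connectedComponentIn Aᶜ (f^[j + 1] y) := by
        calc f^[j + 1] '' connectedComponentIn Aᶜ y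
            = f '' (f^[j] '' connectedComponentIn Aᶜ y) := by
              rw [Function.iterate_succ', Set.image_comp]
          _ = f '' connectedComponentIn Aᶜ (f^[j] y) := by rw [ih2]
          _ = connectedComponentIn Aᶜ (f (f^[j] y)) := hstep _ ih1 ih3
          _ = connectedComponentIn Aᶜ (f^[j + 1] y) := by rw [hnext]
      have h3 : connectedComponentIn Aᶜ (f^[j + 1] y) ⊆ U := by
        rw [hnext, ← hstep _ ih1 ih3]
        exact (Set.image_mono (f := f) ih3).trans hfU
      exact ⟨h1, h2, h3⟩
  -- forward images of C are disjoint from C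
  have hCdisj : ∀ j, 1 ≤ j → Disjoint (f^[j] '' C) C := by
    intro j hj
    have hj2 := (hgen x hxA hxU hCU j).2.1
    rw [Set.disjoint_left]
    intro z hz1 hz2
    have he1 : connectedComponentIn Aᶜ x = connectedComponentIn Aᶜ z := connectedComponentIn_eq hz2
    have he2 : connectedComponentIn Aᶜ (f^[j] x) = connectedComponentIn Aᶜ z :=
      connectedComponentIn_eq (hj2 ▸ hz1)
    have : f^[j] '' C = C := by rw [hj2, he2, ← he1]
    exact hper C hCU ⟨x, hxC⟩ hCsub j hj this
  -- the family of connected components of U meeting CL is finite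
  have hcompfin : {S : Set M | ∃ z ∈ CL, S = connectedComponentIn U z}.Finite := by
    have hcover : CL ⊆ ⋃ z ∈ CL, connectedComponentIn U z := fun z hz =>
      Set.mem_biUnion hz (mem_connectedComponentIn (hattr hz))
    obtain ⟨t, htCL, htfin, htcover⟩ := hCLcomp.elim_finite_subcover_image
      (fun z _ => hU.connectedComponentIn) hcover
    refine (htfin.image fun z => connectedComponentIn U z).subset ?_
    rintro S ⟨z, hzCL, rfl⟩
    obtain ⟨w, hwt, hzw⟩ := Set.mem_iUnion₂.mp (htcover hzCL)
    exact ⟨w, hwt, connectedComponentIn_eq hzw⟩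
  -- two cases according to whether C is clopen
  by_cases hCclop : closure C \ C = ∅
  · -- C is clopen (compact); its iterates are components of U meeting CL; pigeonhole + hper
    have hCcl : IsClosed C := isClosed_of_closure_subset (Set.diff_eq_empty.mp hCclop)
    have hPfacts := hgen x hxA hxU hCU
    have hPopen : ∀ j, IsOpen (f^[j] '' C) := by
      intro j
      rw [(hPfacts j).2.1]
      exact hAc_open.connectedComponentIn
    have hPU : ∀ j, f^[j] '' C ⊆ U := by
      intro j
      rw [(hPfacts j).2.1]
      exact (hPfacts j).2.2
    have hPclosed : ∀ j, IsClosed (f^[j] '' C) := fun j =>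
      ((hCcl.isCompact).image (hf.iterate j)).isClosed
    have hPconn : ∀ j, IsPreconnected (f^[j] '' C) :=
      fun j => (hCconn.image _ (hf.iterate j).continuousOn).isPreconnected
    have hPx : ∀ j, f^[j] x ∈ f^[j] '' C := fun j => Set.mem_image_of_mem _ hxC
    have hPcompU : ∀ j, f^[j] '' C = connectedComponentIn U (f^[j] x) := by
      intro j
      refine aux_eq_cci (hPopen j) (hPU j) ?_ (hPconn j) (hPx j)
      rw [(hPclosed j).closure_eq]
      exact Set.inter_subset_left
    have hPinCL : ∀ j : ℕ, f^[j + 1] x ∈ CL := by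
      intro j
      rw [Function.iterate_succ_apply']
      exact subset_closure (Set.mem_image_of_mem f (horbit x j hxU))
    have hmapsTo : Set.MapsTo (fun j : ℕ => connectedComponentIn U (f^[j + 1] x)) Set.univ
        {S : Set M | ∃ z ∈ CL, S = connectedComponentIn U z} :=
      fun j _ => ⟨f^[j + 1] x, hPinCL j, rfl⟩
    obtain ⟨j, -, k, -, hjk, heq⟩ :=
      Set.infinite_univ.exists_ne_map_eq_of_mapsTo hmapsTo hcompfin
    have hmain : ∀ j k : ℕ, j < k →
        connectedComponentIn U (f^[j + 1] x) = connectedComponentIn U (f^[k + 1] x) → False := by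
      intro j k hjk heq
      have hPeq : f^[j + 1] '' C = f^[k + 1] '' C := by
        rw [hPcompU (j + 1), hPcompU (k + 1), heq]
      have hfix : f^[k - j] '' (f^[j + 1] '' C) = f^[j + 1] '' C := by
        rw [← Set.image_comp, ← Function.iterate_add]
        have h5 : k - j + (j + 1) = k + 1 := by omega
        rw [h5, ← hPeq]
      refine hper (f^[j + 1] '' C) (hPU (j + 1)) ⟨_, hPx (j + 1)⟩ ?_ (k - j) (by omega) hfix
      rw [(hPfacts (j + 1)).2.1]
      exact connectedComponentIn_subset _ _
    rcases Nat.lt_or_ge j k with h | h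
    · exact hmain j k h heq
    · exact hmain k j (by omega) heq.symm
  · -- main case: C has nonempty boundary, contained in A
    obtain ⟨a, ha⟩ := Set.nonempty_iff_ne_empty.mpr hCclop
    have haA : a ∈ A := hCclA ha
    have hM7 : ∀ k, (C ∩ F k).Nonempty := by
      intro k
      have hnb : F k ∈ 𝓝 a := (hFopen k).mem_nhds (hAF k haA)
      obtain ⟨y, hy1, hy2⟩ := mem_closure_iff_nhds.mp ha.1 _ hnb
      exact ⟨y, hy2, hy1⟩
    have hM8 : ∃ N, ∀ m, N ≤ m → ¬ C ⊆ F m := by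
      by_contra h
      push_neg at h
      have hsubA : C ⊆ A := by
        rw [hA]
        intro y hy
        refine Set.mem_iInter.mpr fun k => ?_
        obtain ⟨m, hm, hsub⟩ := h k
        exact hFanti hm (hsub hy)
      exact hxA (hsubA hxC)
    obtain ⟨N, hN⟩ := hM8
    have hM9 : ∀ m, N ≤ m → ∃ v, (v ∈ closure U \ U) ∧ f^[m] v ∈ C := by
      intro m hm
      obtain ⟨y, hyC, hy2⟩ :=
        aux_frontier_hit hCconn.isPreconnected (hFopen m) (hM7 m) (hN m hm)
      have hcl : closure (F m) ⊆ f^[m] '' closure U :=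
        closure_minimal (Set.image_mono (f := _) subset_closure)
          ((isClosed_closure.isCompact.image (hf.iterate m)).isClosed)
      obtain ⟨v, hv, hveq⟩ := hcl hy2.1
      refine ⟨v, ⟨hv, fun hvU => hy2.2 ?_⟩, by rw [hveq]; exact hyC⟩
      exact hveq ▸ Set.mem_image_of_mem _ hvU
    choose! v hv1 hv2 using hM9
    have hfclU : ∀ z, z ∈ closure U → f z ∈ U :=
      fun z hz => hattr (image_closure_subset_closure_image hf ⟨z, hz, rfl⟩)
    set w : ℕ → M := fun m => f (v (m + 1)) with hwdef
    set O : ℕ → Set M := fun m => U ∩ f^[m] ⁻¹' C with hOdef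
    have hOopen : ∀ m, IsOpen (O m) := fun m => hU.inter (hCopen.preimage (hf.iterate m))
    have hwO : ∀ m, N ≤ m → w m ∈ O m := by
      intro m hm
      have h1 := hv1 (m + 1) (by omega)
      have h2 := hv2 (m + 1) (by omega)
      refine ⟨hfclU _ h1.1, ?_⟩
      show f^[m] (f (v (m + 1))) ∈ C
      rw [← Function.iterate_succ_apply]
      exact h2
    have hOdisj : ∀ m' m : ℕ, m' < m → Disjoint (O m') (O m) := by
      intro m' m hlt
      rw [Set.disjoint_left]
      intro z hz' hz
      have h1 : f^[m] z = f^[m - m'] (f^[m'] z) := by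
        rw [← Function.iterate_add_apply]
        congr 1
        omega
      have h2 : f^[m] z ∈ f^[m - m'] '' C := ⟨f^[m'] z, hz'.2, h1.symm⟩
      exact Set.disjoint_left.mp (hCdisj (m - m') (by omega)) h2 hz.2
    set E : ℕ → Set M := fun m => connectedComponentIn (O m) (w m) with hEdef
    have hEopen : ∀ m, IsOpen (E m) := fun m => (hOopen m).connectedComponentIn
    have hEsub : ∀ m, E m ⊆ O m := fun m => connectedComponentIn_subset _ _
    have hEw : ∀ m, N ≤ m → w m ∈ E m := fun m hm => mem_connectedComponentIn (hwO m hm)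
    have hEconn : ∀ m, N ≤ m → IsConnected (E m) :=
      fun m hm => isConnected_connectedComponentIn_iff.mpr (hwO m hm)
    have hEdisj : ∀ m m' : ℕ, m ≠ m' → Disjoint (E m) (E m') := by
      intro m m' hne
      rcases Nat.lt_or_ge m m' with h | h
      · exact (hOdisj m m' h).mono (hEsub m) (hEsub m')
      · exact ((hOdisj m' m (by omega)).mono (hEsub m') (hEsub m)).symm
    have hM12 : ∀ m, N ≤ m → closure (E m) \ E m ⊆ A ∪ (closure U \ U) := by
      intro m hm y hy
      have hyO : y ∉ O m := fun hyO => hy.2 (aux_closure_cci (hwO m hm) ⟨hy.1, hyO⟩)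
      have hyclU : y ∈ closure U :=
        closure_mono ((hEsub m).trans Set.inter_subset_left) hy.1
      by_cases hyU : y ∈ U
      · left
        have h0 : f^[m] '' E m ⊆ C := by
          rintro _ ⟨u, hu, rfl⟩
          exact (hEsub m hu).2
        have h1 : f^[m] y ∈ closure C :=
          closure_mono h0 (image_closure_subset_closure_image (hf.iterate m) ⟨y, hy.1, rfl⟩)
        have h2 : f^[m] y ∈ C ∪ A := by
          by_cases h : f^[m] y ∈ C
          · exact Or.inl h
          · exact Or.inr (hCclA ⟨h1, h⟩)
        rcases h2 with h | h
        · exact absurd (⟨hyU, h⟩ : y ∈ O m) hyO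
        · exact hpreit m y hyU h
      · right
        exact ⟨hyclU, hyU⟩
    -- choose a "collar" V around A inside U
    obtain ⟨V, hVopen, hAV, hVU⟩ := normal_exists_closure_subset hAclosed hU hAsubU
    have hVsubU : V ⊆ U := subset_closure.trans hVU
    have hKclosed : IsClosed (closure V \ V) := isClosed_closure.sdiff hVopen
    have hbUclosed : IsClosed (closure U \ U) := isClosed_closure.sdiff hU
    have hAbU : IsClosed (A ∪ (closure U \ U)) := hAclosed.union hbUclosed
    -- find a good index m with closure (E m) ⊆ V
    have hgoal : ∃ m, N ≤ m ∧ closure (E m) ⊆ V := by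
      by_contra hno
      push_neg at hno
      set Ib := {m : ℕ | N ≤ m ∧ (E m ∩ (closure V \ V)).Nonempty} with hIbdef
      set Ic := {m : ℕ | N ≤ m ∧ closure (E m) ∩ V = ∅} with hIcdef
      have hcases : ∀ m, N ≤ m → m ∈ Ib ∨ m ∈ Ic := by
        intro m hm
        by_cases hK : (closure (E m) ∩ (closure V \ V)).Nonempty
        · left
          refine ⟨hm, ?_⟩
          obtain ⟨z, hz1, hz2⟩ := hK
          by_cases h : z ∈ E m
          · exact ⟨z, h, hz2⟩
          · exfalso
            rcases hM12 m hm ⟨hz1, h⟩ with h' | h'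
            · exact hz2.2 (hAV h')
            · exact h'.2 (hVU hz2.1)
        · right
          refine ⟨hm, ?_⟩
          have hTconn : IsPreconnected (closure (E m)) := (hEconn m hm).isPreconnected.closure
          have hcover : closure (E m) ⊆ V ∪ (closure V)ᶜ := by
            intro z hz
            by_cases h1 : z ∈ V
            · exact Or.inl h1
            · exact Or.inr fun h2 => hK ⟨z, hz, h2, h1⟩
          rcases hTconn.subset_or_subset hVopen isClosed_closure.isOpen_compl
            (disjoint_compl_right.mono_left subset_closure) hcover with h | h
          · exact absurd h (hno m hm)
          · exact Set.eq_empty_iff_forall_notMem.mpr fun z hz => h hz.1 (subset_closure hz.2)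
      have hsubIci : Set.Ici N ⊆ Ib ∪ Ic := fun m hm => hcases m hm
      have hIbIc : Ib.Infinite ∨ Ic.Infinite := by
        by_contra h
        push_neg at h
        exact (Set.Ici_infinite N) ((h.1.union h.2).subset hsubIci)
      rcases hIbIc with hIb | hIc
      · -- accumulation point argument kills this case
        have hq0 : ∀ m, m ∈ Ib → ∃ z, z ∈ E m ∩ (closure V \ V) := fun m hm => hm.2
        choose! q hq using hq0
        have hqinj : Set.InjOn q Ib := by
          intro m hm m' hm' hee
          by_contra hne
          exact Set.disjoint_left.mp (hEdisj m m' hne) (hq m hm).1 (hee ▸ (hq m' hm').1)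
        have hPinf : (q '' Ib).Infinite := (Set.infinite_image_iff hqinj).mpr hIb
        obtain ⟨qq, hqq⟩ := hPinf.exists_accPt_principal
        have hqqnhds : ∀ W ∈ 𝓝 qq, ∃ y ∈ W ∩ (q '' Ib), y ≠ qq := accPt_iff_nhds.mp hqq
        have hqqK : qq ∈ closure V \ V := by
          have h1 : qq ∈ closure (q '' Ib) :=
            mem_closure_iff_nhds.mpr fun t ht => ((hqqnhds t ht).imp fun y hy => hy.1)
          have h2 : q '' Ib ⊆ closure V \ V := by
            rintro _ ⟨m, hm, rfl⟩
            exact (hq m hm).2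
          exact hKclosed.closure_subset ((closure_mono h2) h1)
        have hqqE : ∀ m ∈ Ib, qq ∉ E m := by
          intro m hm hqqEm
          by_cases hee : qq = q m
          · obtain ⟨y, ⟨hyW, hyP⟩, hyne⟩ := hqqnhds (E m) ((hEopen m).mem_nhds hqqEm)
            obtain ⟨m', hm', rfl⟩ := hyP
            have hmm : m' = m := by
              by_contra hne
              exact Set.disjoint_left.mp (hEdisj m' m hne) (hq m' hm').1 hyW
            rw [hmm] at hyne
            exact hyne hee.symm
          · obtain ⟨y, ⟨hyW, hyP⟩, hyne⟩ := hqqnhds (E m \ {q m})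
              (((hEopen m).sdiff isClosed_singleton).mem_nhds
                ⟨hqqEm, by simpa using hee⟩)
            obtain ⟨m', hm', rfl⟩ := hyP
            have hmm : m' = m := by
              by_contra hne
              exact Set.disjoint_left.mp (hEdisj m' m hne) (hq m' hm').1 hyW.1
            exact hyW.2 (Set.mem_singleton_iff.mpr (by rw [hmm]))
        have hqqcl : qq ∈ A ∪ (closure U \ U) := by
          rw [← hAbU.closure_eq]
          refine mem_closure_iff_nhds.mpr fun W hW => ?_
          obtain ⟨B, hBW, hBopen, hBqq, hBconn⟩ :=
            locallyConnectedSpace_iff_subsets_isOpen_isConnected.mp hLC qq W hW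
          obtain ⟨y, ⟨hyB, hyP⟩, hyne⟩ := hqqnhds B (hBopen.mem_nhds hBqq)
          obtain ⟨m, hm, rfl⟩ := hyP
          have h1 : (B ∩ E m).Nonempty := ⟨q m, hyB, (hq m hm).1⟩
          have h2 : ¬ B ⊆ E m := fun hsub => hqqE m hm (hsub hBqq)
          obtain ⟨z, hzB, hzfr⟩ := aux_frontier_hit hBconn.isPreconnected (hEopen m) h1 h2
          exact ⟨z, hBW hzB, hM12 m hm.1 hzfr⟩
        rcases hqqcl with h | h
        · exact hqqK.2 (hAV h)
        · exact h.2 (hVU hqqK.1)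
      · -- Ic infinite: pigeonhole on components of U meeting CL
        have hEcompU : ∀ m, m ∈ Ic → E m = connectedComponentIn U (w m) := by
          intro m hm
          refine aux_eq_cci (hEopen m) ((hEsub m).trans Set.inter_subset_left) ?_
            (hEconn m hm.1).isPreconnected (hEw m hm.1)
          intro z hz
          by_cases h : z ∈ E m
          · exact h
          · exfalso
            rcases hM12 m hm.1 ⟨hz.1, h⟩ with h' | h'
            · have hzz : z ∈ closure (E m) ∩ V := ⟨hz.1, hAV h'⟩
              rw [hm.2] at hzz
              exact hzz
            · exact h'.2 hz.2
        have hmaps : Set.MapsTo (fun m => connectedComponentIn U (w m)) Ic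
            {S : Set M | ∃ z ∈ CL, S = connectedComponentIn U z} := by
          intro m hm
          refine ⟨w m, ?_, rfl⟩
          exact image_closure_subset_closure_image hf
            ⟨v (m + 1), (hv1 (m + 1) (Nat.le_succ_of_le hm.1)).1, rfl⟩
        obtain ⟨m, hm, m', hm', hne, heq⟩ := hIc.exists_ne_map_eq_of_mapsTo hmaps hcompfin
        have hEE : E m = E m' := by rw [hEcompU m hm, hEcompU m' hm', heq]
        exact Set.disjoint_left.mp (hEdisj m m' hne) (hEw m hm.1) (hEE ▸ hEw m hm.1)
    -- conclude: C is contained in F m0, contradiction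
    obtain ⟨m0, hm0N, hm0V⟩ := hgoal
    have hfr : closure (E m0) \ E m0 ⊆ A := by
      intro z hz
      rcases hM12 m0 hm0N hz with h | h
      · exact h
      · exact absurd (hVsubU (hm0V hz.1)) h.2
    have hEAc : E m0 ⊆ Aᶜ := by
      intro z hz hzA
      exact hCsub (hEsub m0 hz).2 (horbitA m0 z hzA)
    have hEcc : E m0 = connectedComponentIn Aᶜ (w m0) := by
      refine aux_eq_cci (hEopen m0) hEAc ?_ (hEconn m0 hm0N).isPreconnected (hEw m0 hm0N)
      intro z hz
      by_cases h : z ∈ E m0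
      · exact h
      · exact absurd (hfr ⟨hz.1, h⟩) hz.2
    have hwAc : w m0 ∈ Aᶜ := hEAc (hEw m0 hm0N)
    have hwU : w m0 ∈ U := (hEsub m0 (hEw m0 hm0N)).1
    have hccU : connectedComponentIn Aᶜ (w m0) ⊆ U := by
      rw [← hEcc]
      exact (hEsub m0).trans Set.inter_subset_left
    have hiter := (hgen (w m0) hwAc hwU hccU m0).2.1
    have hfwC : f^[m0] (w m0) ∈ C := (hwO m0 hm0N).2
    have e1 : C = connectedComponentIn Aᶜ (f^[m0] (w m0)) := by
      rw [hCdef]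
      exact connectedComponentIn_eq hfwC
    have hsubF : C ⊆ F m0 := by
      rw [e1, ← hiter, ← hEcc]
      exact Set.image_mono (f := _) ((hEsub m0).trans Set.inter_subset_left)
    exact hN m0 hm0N hsubF
end
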